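/- For symmetric strictly positive definite real matrices A and B that commute (A·B = B·A), exp(log A + log B) = A·B, where log A is defined by applying the scalar logarithm to the eigenvalues of A in a spectral decomposition. -/

import Mathlib

open Matrix Polynomial

/-- Conjugation by a unit as an algebra homomorphism. -/
noncomputable def conjUnitAlgHom {A : Type*} [Ring A] [Algebra ℝ A] (u : Aˣ) : A →ₐ[ℝ] A where
  toFun x := ↑u * x * ↑u⁻¹
  map_one' := by simp
  map_mul' x y := by
    simp only [mul_assoc, Units.inv_mul_cancel_left]
  map_zero' := by simp
  map_add' x y := by simp [mul_add, add_mul]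
  commutes' r := by
    rw [← Algebra.commutes r (↑u : A), mul_assoc, Units.mul_inv, mul_one]

lemma aeval_unit_conj {A : Type*} [Ring A] [Algebra ℝ A] (u : Aˣ) (D : A) (p : ℝ[X]) :
    aeval ((↑u : A) * D * ↑u⁻¹) p = ↑u * aeval D p * ↑u⁻¹ :=
  Polynomial.aeval_algHom_apply (conjUnitAlgHom u) D p

lemma aeval_diagonal' {n : ℕ} (d : Fin n → ℝ) (p : ℝ[X]) :
    aeval (Matrix.diagonal d) p = Matrix.diagonal (fun i => p.eval (d i)) := by
  have h := Polynomial.aeval_algHom_apply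
    (Matrix.diagonalAlgHom (n := Fin n) (α := ℝ) ℝ) d p
  simp only [Matrix.diagonalAlgHom_apply] at h
  rw [h]
  have h2 : ((aeval d) p : Fin n → ℝ) = fun i => p.eval (d i) := by
    funext i
    have h3 := Polynomial.aeval_algHom_apply (Pi.evalAlgHom ℝ (fun _ : Fin n => ℝ) i) d p
    exact h3.symm.trans (congrFun (Polynomial.coe_aeval_eq_eval (d i)) p)
  rw [h2]

lemma posDef_conj' {n : ℕ} {A U : Matrix (Fin n) (Fin n) ℝ} (hA : A.PosDef)
    (hU : U * Uᵀ = 1) : (Uᵀ * A * U).PosDef := by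
  have hU' : Uᵀ * U = 1 := mul_eq_one_comm.mp hU
  refine posDef_iff_dotProduct_mulVec.mpr ⟨?_, ?_⟩
  · have := isHermitian_conjTranspose_mul_mul U hA.1
    simpa [conjTranspose_eq_transpose_of_trivial] using this
  · intro x hx
    have hx' : U *ᵥ x ≠ 0 := by
      intro h
      apply hx
      have := congrArg (fun v => Uᵀ *ᵥ v) h
      simpa [mulVec_mulVec, hU'] using this
    have := hA.dotProduct_mulVec_pos hx'
    simpa only [star_mulVec, dotProduct_mulVec, vecMul_vecMul,
      conjTranspose_eq_transpose_of_trivial, Matrix.mul_assoc] using this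

/-- The log of a positively decomposed matrix is a polynomial in the matrix. -/
lemma log_is_poly {n : ℕ} (A L U : Matrix (Fin n) (Fin n) ℝ) (d : Fin n → ℝ)
    (hU : U * Uᵀ = 1)
    (hdec : A = U * Matrix.diagonal d * Uᵀ)
    (hL : L = U * Matrix.diagonal (fun i => Real.log (d i)) * Uᵀ) :
    ∃ p : ℝ[X], aeval A p = L := by
  classical
  set s : Finset ℝ := Finset.univ.image d with hs
  refine ⟨Lagrange.interpolate s id Real.log, ?_⟩
  have hU' : Uᵀ * U = 1 := mul_eq_one_comm.mp hU
  let u : (Matrix (Fin n) (Fin n) ℝ)ˣ := ⟨U, Uᵀ, hU, hU'⟩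
  have hinv : (↑u⁻¹ : Matrix (Fin n) (Fin n) ℝ) = Uᵀ := rfl
  have hdec' : A = u.val * Matrix.diagonal d * (u⁻¹).val := by rw [hinv]; exact hdec
  rw [hdec', aeval_unit_conj, aeval_diagonal', hinv, hL]
  have heval : (fun i => (Lagrange.interpolate s id Real.log).eval (d i))
      = fun i => Real.log (d i) := by
    funext i
    exact Lagrange.eval_interpolate_at_node (s := s) (v := id) (r := Real.log)
      (i := d i) (Set.injOn_id _) (Finset.mem_image_of_mem d (Finset.mem_univ i))
  rw [heval]

/-- exp of the log. -/
lemma exp_log_eq {n : ℕ} (A L U : Matrix (Fin n) (Fin n) ℝ) (d : Fin n → ℝ)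
    (hA : A.PosDef)
    (hU : U * Uᵀ = 1)
    (hdec : A = U * Matrix.diagonal d * Uᵀ)
    (hL : L = U * Matrix.diagonal (fun i => Real.log (d i)) * Uᵀ) :
    NormedSpace.exp L = A := by
  have hU' : Uᵀ * U = 1 := mul_eq_one_comm.mp hU
  have hdpos : ∀ i, 0 < d i := by
    have hD : Matrix.diagonal d = Uᵀ * A * U := by
      rw [hdec]
      symm
      calc Uᵀ * (U * Matrix.diagonal d * Uᵀ) * U
          = (Uᵀ * U) * Matrix.diagonal d * (Uᵀ * U) := by
            simp only [Matrix.mul_assoc]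
        _ = Matrix.diagonal d := by rw [hU']; simp
    have : (Matrix.diagonal d).PosDef := hD ▸ posDef_conj' hA hU
    exact Matrix.posDef_diagonal_iff.mp this
  let u : (Matrix (Fin n) (Fin n) ℝ)ˣ := ⟨U, Uᵀ, hU, hU'⟩
  have hinv : (↑u⁻¹ : Matrix (Fin n) (Fin n) ℝ) = Uᵀ := rfl
  have hL' : L = u.val * Matrix.diagonal (fun i => Real.log (d i)) * (u⁻¹).val := by
    rw [hinv]; exact hL
  rw [hL', Matrix.exp_units_conj u, Matrix.exp_diagonal]
  have : NormedSpace.exp (fun i => Real.log (d i)) = d := by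
    rw [Pi.exp_def]
    funext i
    rw [← Real.exp_eq_exp_ℝ, Real.exp_log (hdpos i)]
  rw [this, hinv, ← hdec]

/-- For symmetric strictly positive definite real matrices `A` and `B` that commute,
`exp (log A + log B) = A * B`, where `log A` is defined by applying the scalar
logarithm to the eigenvalues in a spectral decomposition `A = U diag(λ) Uᵀ`. -/
theorem exp_log_add_log_eq_mul_of_posDef_commute
    (n : ℕ) (A B LA LB : Matrix (Fin n) (Fin n) ℝ)
    (hAsymm : A.IsSymm) (hBsymm : B.IsSymm)
    (hA : A.PosDef) (hB : B.PosDef)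
    (UA : Matrix (Fin n) (Fin n) ℝ) (dA : Fin n → ℝ)
    (hUA : UA * UAᵀ = 1)
    (hAdec : A = UA * Matrix.diagonal dA * UAᵀ)
    (hLA : LA = UA * Matrix.diagonal (fun i => Real.log (dA i)) * UAᵀ)
    (UB : Matrix (Fin n) (Fin n) ℝ) (dB : Fin n → ℝ)
    (hUB : UB * UBᵀ = 1)
    (hBdec : B = UB * Matrix.diagonal dB * UBᵀ)
    (hLB : LB = UB * Matrix.diagonal (fun i => Real.log (dB i)) * UBᵀ)
    (hcomm : A * B = B * A) :
    NormedSpace.exp (LA + LB) = A * B := by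
  obtain ⟨p, hp⟩ := log_is_poly A LA UA dA hUA hAdec hLA
  obtain ⟨q, hq⟩ := log_is_poly B LB UB dB hUB hBdec hLB
  have hLAmem : LA ∈ Algebra.adjoin ℝ {A} := hp ▸ Polynomial.aeval_mem_adjoin_singleton ℝ A
  have hLBmem : LB ∈ Algebra.adjoin ℝ {B} := hq ▸ Polynomial.aeval_mem_adjoin_singleton ℝ B
  have hALB : Commute A LB :=
    Algebra.commute_of_mem_adjoin_singleton_of_commute hLBmem hcomm
  have hcommL : Commute LA LB :=
    (Algebra.commute_of_mem_adjoin_singleton_of_commute hLAmem hALB.symm).symm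
  rw [Matrix.exp_add_of_commute LA LB hcommL,
    exp_log_eq A LA UA dA hA hUA hAdec hLA,
    exp_log_eq B LB UB dB hB hUB hBdec hLB]
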